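/- Let G = H(T,C) be a generalized Halin graph with positive Lin-Lu-Yau curvature, x a vertex of T of maximum degree D(T). If T has exactly D(T) leaves and D(T) ≥ 4, then every cycle vertex y satisfies d_T(x,y) ≤ 2. -/

import Mathlib

open SimpleGraph

attribute [local instance] Classical.propDecidable

variable {V : Type*}

/-- Normalized graph Laplacian applied to an integer-valued function. -/
noncomputable def lap (G : SimpleGraph V) [∀ v : V, Fintype (G.neighborSet v)]
    (f : V → ℤ) (v : V) : ℝ :=
  (∑ w ∈ G.neighborFinset v, ((f w : ℝ) - (f v : ℝ))) / (G.degree v : ℝ)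

/-- Lin-Lu-Yau curvature via the Laplacian (Münch–Wojciechowski) formulation:
the infimum of `Δf(x) − Δf(y)` over integer-valued functions that are
1-Lipschitz on `N[x] ∪ N[y]` and satisfy `f(y) − f(x) = 1`. -/
noncomputable def kappaLLY (G : SimpleGraph V) [∀ v : V, Fintype (G.neighborSet v)]
    (x y : V) : ℝ :=
  sInf { r : ℝ | ∃ f : V → ℤ,
    (∀ u ∈ insert x (G.neighborSet x) ∪ insert y (G.neighborSet y),
      ∀ v ∈ insert x (G.neighborSet x) ∪ insert y (G.neighborSet y),
        |f u - f v| ≤ (G.dist u v : ℤ)) ∧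
    f y - f x = 1 ∧ r = lap G f x - lap G f y }

/-- The edge `{p,q}` is contained in no triangle and no 4-cycle. -/
def noC3C4 (G : SimpleGraph V) (p q : V) : Prop :=
  (∀ z : V, ¬ (G.Adj p z ∧ G.Adj z q)) ∧
  (∀ u v : V, G.Adj p u → G.Adj u v → G.Adj v q → u = q ∨ v = p)

/-- The wheel graph on `Fin n`: hub `0` joined to the rim cycle `1, …, n-1`. -/
noncomputable def wheel (n : ℕ) : SimpleGraph (Fin n) :=
  SimpleGraph.fromRel (fun a b =>
    a.val = 0 ∨ b.val = a.val + 1 ∨ (a.val = n - 1 ∧ b.val = 1))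

/-- `u` and `v` lie in the same component of `T − x`. -/
def SameComp (T : SimpleGraph V) (x u v : V) : Prop :=
  ∃ w : T.Walk u v, x ∉ w.support

/-- The generalized Halin graph obtained from the tree `T` by joining its
leaves, listed in the cyclic order `σ`, by a cycle. -/
noncomputable def halinGraph (T : SimpleGraph V) {ℓ : ℕ} (σ : ZMod ℓ → V) : SimpleGraph V :=
  T ⊔ SimpleGraph.fromRel (fun a b => ∃ i : ZMod ℓ, a = σ i ∧ b = σ (i + 1))

/-- Distance from a vertex to a set of vertices. -/
noncomputable def distToSet (G : SimpleGraph V) (S : Set V) (z : V) : ℕ :=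
  sInf {d : ℕ | ∃ s ∈ S, d = G.dist z s}


lemma two_le_dist' {G : SimpleGraph V} {u v : V} (hr : G.Reachable u v) (hne : u ≠ v)
    (hna : ¬ G.Adj u v) : 2 ≤ G.dist u v := by
  have h0 : 0 < G.dist u v := hr.pos_dist_of_ne hne
  have h1 : G.dist u v ≠ 1 := fun h => hna (SimpleGraph.dist_eq_one_iff_adj.mp h)
  omega

lemma kappa_nonpos (G : SimpleGraph V) [∀ v : V, Fintype (G.neighborSet v)]
    (hconn : G.Connected) {p q : V} (hpq : G.Adj p q) (hno : noC3C4 G p q)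
    (hle : 1/(G.degree p : ℝ) + 2/(G.degree q : ℝ) - 1 ≤ 0) :
    kappaLLY G p q ≤ 0 := by
  classical
  set f : V → ℤ := fun z => if z = p then 0 else if z = q then 1 else if G.Adj q z then 2 else 0
    with hf
  have hne : p ≠ q := hpq.ne
  have hfp : f p = 0 := by simp [hf]
  have hfq : f q = 1 := by simp [hf, hne.symm]
  -- value of f on neighbors of p (other than q) and of q (other than p)
  have hdp_pos : 0 < (G.degree p : ℝ) := by
    have : 0 < G.degree p := G.degree_pos_iff_exists_adj p |>.mpr ⟨q, hpq⟩
    exact_mod_cast this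
  have hdq_pos : 0 < (G.degree q : ℝ) := by
    have : 0 < G.degree q := G.degree_pos_iff_exists_adj q |>.mpr ⟨p, hpq.symm⟩
    exact_mod_cast this
  -- the Lipschitz condition
  have key : ∀ u, (u = p ∨ u = q ∨ G.Adj p u ∨ G.Adj q u) →
      ∀ v, (v = p ∨ v = q ∨ G.Adj p v ∨ G.Adj q v) →
      f u - f v ≤ (G.dist u v : ℤ) := by
    have hval : ∀ w, (w = p ∨ w = q ∨ G.Adj p w ∨ G.Adj q w) →
        (f w = 0 ∧ (w = p ∨ (G.Adj p w ∧ ¬ G.Adj q w ∧ w ≠ q))) ∨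
        (f w = 1 ∧ w = q) ∨
        (f w = 2 ∧ G.Adj q w ∧ w ≠ p ∧ w ≠ q) := by
      intro w hw
      by_cases hwp : w = p
      · exact Or.inl ⟨by simp [hf, hwp], Or.inl hwp⟩
      by_cases hwq : w = q
      · exact Or.inr (Or.inl ⟨by simp [hf, hwp, hwq, hne.symm], hwq⟩)
      by_cases hA : G.Adj q w
      · exact Or.inr (Or.inr ⟨by simp [hf, hwp, hwq, hA], hA, hwp, hwq⟩)
      · refine Or.inl ⟨by simp [hf, hwp, hwq, hA], Or.inr ⟨?_, hA, hwq⟩⟩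
        rcases hw with h | h | h | h
        · exact absurd h hwp
        · exact absurd h hwq
        · exact h
        · exact absurd h hA
    intro u hu v hv
    by_cases huv : u = v
    · subst huv; simp
    have hreach : G.Reachable u v := hconn u v
    have hd1 : (1 : ℤ) ≤ (G.dist u v : ℤ) := by
      exact_mod_cast hreach.pos_dist_of_ne huv
    have hvb : 0 ≤ f v ∧ f v ≤ 2 := by simp only [hf]; split_ifs <;> omega
    rcases hval u hu with ⟨h0, _⟩ | ⟨h1, _⟩ | ⟨h2, hAqu, hunp, hunq⟩
    · omega
    · omega
    · rcases hval v hv with ⟨h0', hv'⟩ | ⟨h1', _⟩ | ⟨h2', _⟩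
      · -- the hard case : f u = 2, f v = 0
        have hnadj : ¬ G.Adj u v := by
          intro hadj
          rcases hv' with rfl | ⟨hApv, hAqv, hvq⟩
          · exact hno.1 u ⟨hadj.symm, hAqu.symm⟩
          · rcases hno.2 v u hApv hadj.symm hAqu.symm with h | h
            · exact hvq h
            · exact hunp h
        have h2d : (2 : ℤ) ≤ (G.dist u v : ℤ) := by
          exact_mod_cast two_le_dist' hreach huv hnadj
        omega
      · omega
      · omega
  -- neighbor membership
  have hq_mem : q ∈ G.neighborFinset p := by rw [SimpleGraph.mem_neighborFinset]; exact hpq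
  have hp_mem : p ∈ G.neighborFinset q := by rw [SimpleGraph.mem_neighborFinset]; exact hpq.symm
  have hsum_p : ∑ w ∈ G.neighborFinset p, ((f w : ℝ) - (f p : ℝ)) = 1 := by
    have hcong : ∀ w ∈ G.neighborFinset p, ((f w : ℝ) - (f p : ℝ)) = if w = q then (1 : ℝ) else 0 := by
      intro w hw
      rw [SimpleGraph.mem_neighborFinset] at hw
      rw [hfp]
      by_cases hwq : w = q
      · simp [hf, hwq, hne.symm]
      · have hwp : w ≠ p := hw.ne'
        have hnq : ¬ G.Adj q w := fun h => hno.1 w ⟨hw, h.symm⟩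
        simp [hf, hwp, hwq, hnq]
    rw [Finset.sum_congr rfl hcong, Finset.sum_ite_eq' _ q (fun _ => (1:ℝ)), if_pos hq_mem]
  have hsum_q : ∑ w ∈ G.neighborFinset q, ((f w : ℝ) - (f q : ℝ)) = (G.degree q : ℝ) - 2 := by
    have hcong : ∀ w ∈ G.neighborFinset q, ((f w : ℝ) - (f q : ℝ))
        = 1 + (if w = p then (-2 : ℝ) else 0) := by
      intro w hw
      rw [SimpleGraph.mem_neighborFinset] at hw
      rw [hfq]
      by_cases hwp : w = p
      · subst hwp; rw [hfp]; norm_num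
      · have hwq : w ≠ q := hw.ne'
        have : f w = 2 := by simp [hf, hwp, hwq, hw]
        rw [this, if_neg hwp]; norm_num
    rw [Finset.sum_congr rfl hcong, Finset.sum_add_distrib, Finset.sum_const,
      Finset.sum_ite_eq' _ p (fun _ => (-2:ℝ)), if_pos hp_mem]
    rw [SimpleGraph.degree]
    push_cast
    ring
  set r0 : ℝ := 1/(G.degree p : ℝ) + 2/(G.degree q : ℝ) - 1 with hr0
  have hlapp : lap G f p = 1 / (G.degree p : ℝ) := by rw [lap, hsum_p]
  have hlapq : lap G f q = ((G.degree q : ℝ) - 2) / (G.degree q : ℝ) := by rw [lap, hsum_q]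
  have hr0eq : r0 = lap G f p - lap G f q := by
    rw [hlapp, hlapq, hr0]
    field_simp
    ring
  set S := { r : ℝ | ∃ f : V → ℤ,
    (∀ u ∈ insert p (G.neighborSet p) ∪ insert q (G.neighborSet q),
      ∀ v ∈ insert p (G.neighborSet p) ∪ insert q (G.neighborSet q),
        |f u - f v| ≤ (G.dist u v : ℤ)) ∧
    f q - f p = 1 ∧ r = lap G f p - lap G f q } with hS
  have hmem : r0 ∈ S := by
    refine ⟨f, ?_, by rw [hfq, hfp]; norm_num, hr0eq⟩
    intro u hu v hv
    have hu' : u = p ∨ u = q ∨ G.Adj p u ∨ G.Adj q u := by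
      simp only [Set.mem_union, Set.mem_insert_iff, SimpleGraph.mem_neighborSet] at hu; tauto
    have hv' : v = p ∨ v = q ∨ G.Adj p v ∨ G.Adj q v := by
      simp only [Set.mem_union, Set.mem_insert_iff, SimpleGraph.mem_neighborSet] at hv; tauto
    have h1 := key u hu' v hv'
    have h2 := key v hv' u hu'
    rw [SimpleGraph.dist_comm] at h2
    exact abs_sub_le_iff.mpr ⟨h1, h2⟩
  have hk : kappaLLY G p q = sInf S := rfl
  rw [hk]
  by_cases hb : BddBelow S
  · exact le_trans (csInf_le hb hmem) hle
  · rw [Real.sInf_of_not_bddBelow hb]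

lemma dist_getVert_le {G : SimpleGraph V} (hconn : G.Connected) {u v : V} (p : G.Walk u v) :
    ∀ k, G.dist u (p.getVert k) ≤ k := by
  intro k
  induction k with
  | zero => simp [SimpleGraph.Walk.getVert_zero, SimpleGraph.dist_self]
  | succ k ih =>
    by_cases hk : k < p.length
    · have hadj := p.adj_getVert_succ hk
      calc G.dist u (p.getVert (k+1))
          ≤ G.dist u (p.getVert k) + G.dist (p.getVert k) (p.getVert (k+1)) :=
            hconn.dist_triangle
        _ ≤ k + 1 := by rw [SimpleGraph.dist_eq_one_iff_adj.mpr hadj]; omega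
    · rw [SimpleGraph.Walk.getVert_of_length_le p (by omega)]
      have := SimpleGraph.dist_le p
      omega

lemma dist_getVert_eq {G : SimpleGraph V} (hconn : G.Connected) {u v : V} (p : G.Walk u v)
    (hp : p.length = G.dist u v) {k : ℕ} (hk : k ≤ p.length) :
    G.dist u (p.getVert k) = k := by
  have h1 : G.dist u (p.getVert k) ≤ k := dist_getVert_le hconn p k
  have h2 : G.dist (p.getVert k) v ≤ p.length - k := by
    have := dist_getVert_le hconn p.reverse (p.length - k)
    rw [SimpleGraph.Walk.getVert_reverse] at this
    have hkk : p.length - (p.length - k) = k := by omega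
    rw [hkk] at this
    rwa [SimpleGraph.dist_comm]
  have h3 : G.dist u v ≤ G.dist u (p.getVert k) + G.dist (p.getVert k) v := hconn.dist_triangle
  omega

lemma degree_le_two [Fintype V] (T : SimpleGraph V) (hT : T.IsTree) (x : V)
    (hx : 4 ≤ T.degree x) (hleaves : {v : V | T.degree v = 1}.ncard = T.degree x) :
    ∀ v : V, v ≠ x → T.degree v ≤ 2 := by
  classical
  have hconn := hT.isConnected
  -- every vertex has positive degree
  have hpos : ∀ v : V, 1 ≤ T.degree v := by
    intro v
    by_cases hvx : v = x
    · subst hvx; omega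
    · rw [Nat.one_le_iff_ne_zero, ← Nat.pos_iff_ne_zero, T.degree_pos_iff_exists_adj]
      obtain ⟨w⟩ := (hconn v x)
      cases w with
      | nil => exact absurd rfl hvx
      | cons h _ => exact ⟨_, h⟩
  set L : Finset V := Finset.univ.filter (fun v => T.degree v = 1) with hL
  have hLcard : L.card = T.degree x := by
    rw [← hleaves, Set.ncard_eq_toFinset_card', Set.toFinset_setOf]
  have hxL : x ∉ L := by simp [hL]; omega
  set R : Finset V := Finset.univ \ insert x L with hR
  have hsub : insert x L ⊆ Finset.univ := Finset.subset_univ _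
  have hcards : R.card + (insert x L).card = Fintype.card V :=
    Finset.card_sdiff_add_card_eq_card hsub
  have hsums : (∑ v ∈ R, T.degree v) + (∑ v ∈ insert x L, T.degree v)
      = ∑ v : V, T.degree v := Finset.sum_sdiff hsub
  have hedge : T.edgeFinset.card + 1 = Fintype.card V := hT.card_edgeFinset
  have hhs : ∑ v : V, T.degree v = 2 * T.edgeFinset.card :=
    SimpleGraph.sum_degrees_eq_twice_card_edges T
  have hsumL : ∑ v ∈ L, T.degree v = L.card := by
    rw [Finset.sum_congr rfl (fun v hv => by simpa [hL] using (Finset.mem_filter.mp hv).2)]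
    simp
  have hsumIns : ∑ v ∈ insert x L, T.degree v = T.degree x + L.card := by
    rw [Finset.sum_insert hxL, hsumL]
  have hinscard : (insert x L).card = L.card + 1 := Finset.card_insert_of_notMem hxL
  -- each vertex of R has degree ≥ 2
  have hR2 : ∀ v ∈ R, 2 ≤ T.degree v := by
    intro v hv
    rw [hR, Finset.mem_sdiff, Finset.mem_insert] at hv
    push_neg at hv
    have h1 := hpos v
    have hne1 : T.degree v ≠ 1 := by
      intro h
      exact hv.2.2 (by simp [hL, h])
    omega
  have hsumR : ∑ v ∈ R, T.degree v = 2 * R.card := by omega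
  intro v hvx
  by_cases hvL : v ∈ L
  · have := (Finset.mem_filter.mp hvL).2
    omega
  · have hvR : v ∈ R := by
      rw [hR, Finset.mem_sdiff, Finset.mem_insert]
      push_neg
      exact ⟨Finset.mem_univ v, hvx, hvL⟩
    by_contra hgt
    push_neg at hgt
    have hlt : ∑ w ∈ R, 2 < ∑ w ∈ R, T.degree w :=
      Finset.sum_lt_sum hR2 ⟨v, hvR, hgt⟩
    rw [Finset.sum_const, smul_eq_mul] at hlt
    omega

lemma halin_adj_iff {T : SimpleGraph V} {ℓ : ℕ} {σ : ZMod ℓ → V} {v w : V}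
    (hv : v ∉ Set.range σ) : (halinGraph T σ).Adj v w ↔ T.Adj v w := by
  constructor
  · intro h
    rcases h with h | h
    · exact h
    · rcases h with ⟨hne, ⟨i, h1, h2⟩ | ⟨i, h1, h2⟩⟩
      · exact absurd ⟨i, h1.symm⟩ hv
      · exact absurd ⟨i + 1, h2.symm⟩ hv
  · intro h; exact Or.inl h

lemma halin_nbrFinset {T : SimpleGraph V} [Fintype V] {ℓ : ℕ} {σ : ZMod ℓ → V} {v : V}
    (hv : v ∉ Set.range σ) [Fintype ((halinGraph T σ).neighborSet v)] [Fintype (T.neighborSet v)] :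
    (halinGraph T σ).neighborFinset v = T.neighborFinset v := by
  ext w
  rw [SimpleGraph.mem_neighborFinset, SimpleGraph.mem_neighborFinset, halin_adj_iff hv]

lemma halin_degree {T : SimpleGraph V} [Fintype V] {ℓ : ℕ} {σ : ZMod ℓ → V} {v : V}
    (hv : v ∉ Set.range σ) [Fintype ((halinGraph T σ).neighborSet v)] [Fintype (T.neighborSet v)] :
    (halinGraph T σ).degree v = T.degree v := by
  rw [SimpleGraph.degree, SimpleGraph.degree, halin_nbrFinset hv]

theorem stmt14 {V : Type*} [Fintype V] (T : SimpleGraph V) (hT : T.IsTree)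
    (ℓ : ℕ) (hℓ : 3 ≤ ℓ) (σ : ZMod ℓ → V) (hinj : Function.Injective σ)
    (hleaf : ∀ v : V, v ∈ Set.range σ ↔ T.degree v = 1)
    (x : V) (hmax : ∀ v : V, T.degree v ≤ T.degree x) (hx : 4 ≤ T.degree x)
    (hleaves : {v : V | T.degree v = 1}.ncard = T.degree x)
    (hpos : ∀ u v : V, (halinGraph T σ).Adj u v →
      0 < kappaLLY (halinGraph T σ) u v) :
    ∀ i : ZMod ℓ, T.dist x (σ i) ≤ 2 := by
  intro i
  by_contra hgt
  push_neg at hgt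
  set y := σ i with hy
  have hconnT : T.Connected := hT.isConnected
  obtain ⟨p, hp⟩ := hconnT.exists_walk_length_eq_dist x y
  have hd3 : 3 ≤ p.length := by rw [hp]; omega
  set v1 := p.getVert 1 with hv1
  set v2 := p.getVert 2 with hv2
  set v3 := p.getVert 3 with hv3
  have h1 : T.dist x v1 = 1 := dist_getVert_eq hconnT p hp (by omega)
  have h2 : T.dist x v2 = 2 := dist_getVert_eq hconnT p hp (by omega)
  have h3 : T.dist x v3 = 3 := dist_getVert_eq hconnT p hp (by omega)
  have a01 : T.Adj x v1 := by
    have := p.adj_getVert_succ (show 0 < p.length by omega)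
    rwa [SimpleGraph.Walk.getVert_zero] at this
  have a12 : T.Adj v1 v2 := p.adj_getVert_succ (by omega)
  have a23 : T.Adj v2 v3 := p.adj_getVert_succ (by omega)
  have hdle := degree_le_two T hT x hx hleaves
  -- distinctness
  have hv1x : v1 ≠ x := by
    intro h; rw [h, SimpleGraph.dist_self] at h1; omega
  have hv2x : v2 ≠ x := by
    intro h; rw [h, SimpleGraph.dist_self] at h2; omega
  have hxnv2 : x ≠ v2 := fun h => hv2x h.symm
  have hv1nv3 : v1 ≠ v3 := by
    intro h; rw [h, h3] at h1; omega
  -- degree of v1 is 2 with neighbors x, v2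
  have hsub1 : ({x, v2} : Finset V) ⊆ T.neighborFinset v1 := by
    intro z hz
    rcases Finset.mem_insert.mp hz with rfl | hz
    · exact SimpleGraph.mem_neighborFinset _ _ _ |>.mpr a01.symm
    · rw [Finset.mem_singleton] at hz; subst hz
      exact SimpleGraph.mem_neighborFinset _ _ _ |>.mpr a12
  have hcard1 : ({x, v2} : Finset V).card = 2 := by
    rw [Finset.card_insert_of_notMem (by simp [hxnv2]), Finset.card_singleton]
  have hdv1 : T.degree v1 = 2 := by
    have hle2 := hdle v1 hv1x
    have := Finset.card_le_card hsub1
    rw [hcard1] at this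
    rw [SimpleGraph.degree] at hle2 ⊢
    omega
  have hNv1 : T.neighborFinset v1 = ({x, v2} : Finset V) := by
    refine (Finset.eq_of_subset_of_card_le hsub1 ?_).symm
    rw [hcard1]
    exact hdv1.le
  -- degree of v2 is 2 with neighbors v1, v3
  have hsub2 : ({v1, v3} : Finset V) ⊆ T.neighborFinset v2 := by
    intro z hz
    rcases Finset.mem_insert.mp hz with rfl | hz
    · exact SimpleGraph.mem_neighborFinset _ _ _ |>.mpr a12.symm
    · rw [Finset.mem_singleton] at hz; subst hz
      exact SimpleGraph.mem_neighborFinset _ _ _ |>.mpr a23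
  have hcard2 : ({v1, v3} : Finset V).card = 2 := by
    rw [Finset.card_insert_of_notMem (by simp [hv1nv3]), Finset.card_singleton]
  have hdv2 : T.degree v2 = 2 := by
    have hle2 := hdle v2 hv2x
    have := Finset.card_le_card hsub2
    rw [hcard2] at this
    rw [SimpleGraph.degree] at hle2 ⊢
    omega
  have hNv2 : T.neighborFinset v2 = ({v1, v3} : Finset V) := by
    refine (Finset.eq_of_subset_of_card_le hsub2 ?_).symm
    rw [hcard2]
    exact hdv2.le
  have tn1 : ∀ z, T.Adj v1 z → z = x ∨ z = v2 := by
    intro z hz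
    have : z ∈ T.neighborFinset v1 := (SimpleGraph.mem_neighborFinset _ _ _).mpr hz
    rw [hNv1] at this
    simpa using this
  have tn2 : ∀ z, T.Adj v2 z → z = v1 ∨ z = v3 := by
    intro z hz
    have : z ∈ T.neighborFinset v2 := (SimpleGraph.mem_neighborFinset _ _ _).mpr hz
    rw [hNv2] at this
    simpa using this
  -- non-leaves
  have hnlv1 : v1 ∉ Set.range σ := fun h => by
    have := (hleaf v1).mp h; omega
  have hnlv2 : v2 ∉ Set.range σ := fun h => by
    have := (hleaf v2).mp h; omega
  have hnlx : x ∉ Set.range σ := fun h => by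
    have := (hleaf x).mp h; omega
  set G := halinGraph T σ with hG
  have hGconn : G.Connected := SimpleGraph.Connected.mono le_sup_left hconnT
  have gadj1 : ∀ z, G.Adj v1 z → z = x ∨ z = v2 :=
    fun z h => tn1 z ((halin_adj_iff hnlv1).mp h)
  have gadj2 : ∀ z, G.Adj v2 z → z = v1 ∨ z = v3 :=
    fun z h => tn2 z ((halin_adj_iff hnlv2).mp h)
  have gadjx : ∀ z, G.Adj x z → T.Adj x z := fun z => (halin_adj_iff hnlx).mp
  have hadj_v1x : G.Adj v1 x := (halin_adj_iff hnlv1).mpr a01.symm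
  have hnoC : noC3C4 G v1 x := by
    constructor
    · rintro z ⟨hz1, hz2⟩
      rcases gadj1 z hz1 with h | h
      · rw [h] at hz2; exact (G.loopless.irrefl x) hz2
      · rw [h] at hz2
        rcases gadj2 x hz2 with h' | h'
        · exact hv1x h'.symm
        · rw [← h', SimpleGraph.dist_self] at h3; omega
    · intro u v hu huv hvx
      rcases gadj1 u hu with h | h
      · exact Or.inl h
      · rw [h] at huv
        rcases gadj2 v huv with h' | h'
        · exact Or.inr h'
        · exfalso
          rw [h'] at hvx
          have hadj : T.Adj x v3 := gadjx v3 hvx.symm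
          have : T.dist x v3 = 1 := SimpleGraph.dist_eq_one_iff_adj.mpr hadj
          omega
  have hGdv1 : G.degree v1 = 2 := by rw [hG, halin_degree hnlv1]; exact hdv1
  have hGdx : 4 ≤ G.degree x := by rw [hG, halin_degree hnlx]; exact hx
  have hle0 : 1/(G.degree v1 : ℝ) + 2/(G.degree x : ℝ) - 1 ≤ 0 := by
    rw [hGdv1]
    have h4 : (4:ℝ) ≤ (G.degree x : ℝ) := by exact_mod_cast hGdx
    have hxx : 2/(G.degree x : ℝ) ≤ 1/2 := by
      rw [div_le_div_iff₀ (by linarith) (by norm_num)]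
      linarith
    push_cast
    linarith
  have hk := kappa_nonpos G hGconn hadj_v1x hnoC hle0
  have hp2 := hpos v1 x hadj_v1x
  linarith
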